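/- Let M be a matching in a finite graph G with nonnegative edge weights w, and let π : V → ℝ be a feasible vertex potential (π(u) + π(v) ≥ w({u,v}) for every edge {u,v} ∈ G and π(v) ≥ 0 for all v). If every edge of M is tight (π(u) + π(v) = w({u,v}) for {u,v} ∈ M) and every vertex v with π(v) ≠ 0 is covered by M, then M is a maximum-weight matching of G, i.e. w(M) ≥ w(M') for every matching M' of G. -/
import Mathlib


open Finset

/-- A finite graph is identified with its finite set of edges, each a 2-element vertex set. -/
def IsGraph {V : Type*} (G : Finset (Finset V)) : Prop := ∀ e ∈ G, e.card = 2

/-- A matching is a set of pairwise disjoint edges. -/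
def IsMatching {V : Type*} (M : Finset (Finset V)) : Prop :=
  ∀ e ∈ M, ∀ f ∈ M, e ≠ f → Disjoint e f

/-- **Weight-maximality criterion.** If `M` is a matching in `G`, `π` is a feasible vertex
potential, every edge of `M` is tight, and every vertex of non-zero potential is matched,
then `M` is a maximum-weight matching of `G`. -/
theorem max_weight_if_tight_matching_covers_nonzeros
    {V : Type*} [DecidableEq V]
    (G : Finset (Finset V)) (hG : IsGraph G) (w : Finset V → ℝ)
    (hw : ∀ e ∈ G, 0 ≤ w e)
    (M : Finset (Finset V)) (hM : IsMatching M) (hMG : M ⊆ G)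
    (π : V → ℝ)
    (hfeas_edge : ∀ e ∈ G, w e ≤ ∑ v ∈ e, π v)
    (hfeas_nonneg : ∀ v ∈ G.biUnion id, 0 ≤ π v)
    (htight : ∀ e ∈ M, ∑ v ∈ e, π v = w e)
    (hcover : ∀ v ∈ G.biUnion id, π v ≠ 0 → ∃ e ∈ M, v ∈ e) :
    ∀ M' : Finset (Finset V), IsMatching M' → M' ⊆ G →
      ∑ e ∈ M', w e ≤ ∑ e ∈ M, w e := by
  intro M' hM' hM'G
  have key : ∀ (N : Finset (Finset V)), IsMatching N → N ⊆ G →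
      ∑ e ∈ N, ∑ v ∈ e, π v = ∑ v ∈ N.biUnion id, π v := by
    intro N hN hNG
    have hdisj : (↑N : Set (Finset V)).PairwiseDisjoint id :=
      fun e he f hf hef => hN e he f hf hef
    rw [Finset.sum_biUnion hdisj]
    rfl
  have hsub : ∀ (N : Finset (Finset V)), N ⊆ G → N.biUnion id ⊆ G.biUnion id := by
    intro N hNG
    exact Finset.biUnion_subset_biUnion_of_subset_left id hNG
  calc ∑ e ∈ M', w e ≤ ∑ e ∈ M', ∑ v ∈ e, π v :=
        Finset.sum_le_sum fun e he => hfeas_edge e (hM'G he)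
    _ = ∑ v ∈ M'.biUnion id, π v := key M' hM' hM'G
    _ ≤ ∑ v ∈ G.biUnion id, π v := by
        apply Finset.sum_le_sum_of_subset_of_nonneg (hsub M' hM'G)
        intro v hv _
        exact hfeas_nonneg v hv
    _ = ∑ v ∈ M.biUnion id, π v := by
        symm
        apply Finset.sum_subset (hsub M hMG)
        intro v hv hvn
        by_contra hne
        obtain ⟨e, he, hve⟩ := hcover v hv hne
        exact hvn (Finset.mem_biUnion.mpr ⟨e, he, hve⟩)
    _ = ∑ e ∈ M, ∑ v ∈ e, π v := (key M hM hMG).symm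
    _ = ∑ e ∈ M, w e := Finset.sum_congr rfl fun e he => htight e he
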